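/- If g : [a,b] → ℝ has negligible variation on E ⊆ [a,b], then the image g(E) has Lebesgue measure zero. -/

import Mathlib

open Set MeasureTheory Filter
open scoped Classical

/-- A tagged partition of `[a, b]`: division points `t 0 = a ≤ t 1 ≤ ⋯ ≤ t n = b`
together with tags `tag i ∈ [t i, t (i+1)]`. -/
structure TaggedPartition (a b : ℝ) where
  n : ℕ
  t : ℕ → ℝ
  tag : ℕ → ℝ
  t_first : t 0 = a
  t_last : t n = b
  t_mono : ∀ i < n, t i ≤ t (i + 1)
  tag_mem : ∀ i < n, tag i ∈ Set.Icc (t i) (t (i + 1))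

/-- A tagged partition is subordinate to a gauge `δ` if each interval is contained in the
open ball of radius `δ` around its tag. -/
def TaggedPartition.Subordinate {a b : ℝ} (P : TaggedPartition a b) (δ : ℝ → ℝ) : Prop :=
  ∀ i < P.n,
    Set.Icc (P.t i) (P.t (i + 1)) ⊆ Set.Ioo (P.tag i - δ (P.tag i)) (P.tag i + δ (P.tag i))

/-- A gauge on `[a, b]` is positive on `[a, b]`. -/
def IsGauge (a b : ℝ) (δ : ℝ → ℝ) : Prop := ∀ x ∈ Set.Icc a b, 0 < δ x

/-- `f` has negligible variation on `E ⊆ [a, b]`. -/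

def NegVar (a b : ℝ) (f : ℝ → ℝ) (E : Set ℝ) : Prop :=
  ∀ ε > 0, ∃ δ : ℝ → ℝ, IsGauge a b δ ∧ ∀ P : TaggedPartition a b, P.Subordinate δ →
    (∑ i ∈ Finset.range P.n,
      if P.tag i ∈ E then |f (P.t (i + 1)) - f (P.t i)| else 0) < ε

/-- `f` has negligible conditional variation on `E ⊆ [a, b]`. -/

def NegCondVar (a b : ℝ) (f : ℝ → ℝ) (E : Set ℝ) : Prop :=
  ∀ ε > 0, ∃ δ : ℝ → ℝ, IsGauge a b δ ∧ ∀ P : TaggedPartition a b, P.Subordinate δ →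
    |∑ i ∈ Finset.range P.n,
      if P.tag i ∈ E then f (P.t (i + 1)) - f (P.t i) else 0| < ε

/-- `I` is the Henstock–Kurzweil integral of `h` on `[a, b]` (with `a ≤ b`). -/
def HKIntegralTo (a b : ℝ) (h : ℝ → ℝ) (I : ℝ) : Prop :=
  ∀ ε > 0, ∃ δ : ℝ → ℝ, IsGauge a b δ ∧ ∀ P : TaggedPartition a b, P.Subordinate δ →
    |(∑ i ∈ Finset.range P.n, h (P.tag i) * (P.t (i + 1) - P.t i)) - I| < ε

/-- Oriented HK integral: `(HK)∫_a^b h = I`, with the convention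
`(HK)∫_b^a h = -(HK)∫_a^b h`. -/
def HKIntegral (a b : ℝ) (h : ℝ → ℝ) (I : ℝ) : Prop :=
  if a ≤ b then HKIntegralTo a b h I else HKIntegralTo b a h (-I)

namespace NVAux

noncomputable def TPsum (g : ℝ → ℝ) (E : Set ℝ) {p q : ℝ} (P : TaggedPartition p q) : ℝ :=
  ∑ i ∈ Finset.range P.n, if P.tag i ∈ E then |g (P.t (i + 1)) - g (P.t i)| else 0

lemma TPsum_nonneg (g : ℝ → ℝ) (E : Set ℝ) {p q : ℝ} (P : TaggedPartition p q) :
    0 ≤ TPsum g E P :=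
  Finset.sum_nonneg fun i _ => by positivity

def triv (p : ℝ) : TaggedPartition p p :=
  ⟨0, fun _ => p, fun _ => p, rfl, rfl, fun i hi => absurd hi (Nat.not_lt_zero i),
   fun i hi => absurd hi (Nat.not_lt_zero i)⟩

lemma triv_sub (p : ℝ) (δ : ℝ → ℝ) : (triv p).Subordinate δ :=
  fun i hi => absurd hi (Nat.not_lt_zero i)

def single {p q : ℝ} (hpq : p ≤ q) (τ : ℝ) (hτ : τ ∈ Icc p q) : TaggedPartition p q where
  n := 1
  t i := if i = 0 then p else q
  tag _ := τ
  t_first := by simp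
  t_last := by simp
  t_mono := by
    intro i hi
    have : i = 0 := by omega
    subst this; simpa using hpq
  tag_mem := by
    intro i hi
    have : i = 0 := by omega
    subst this; simpa using hτ

lemma single_sub {p q : ℝ} (hpq : p ≤ q) (τ : ℝ) (hτ : τ ∈ Icc p q) (δ : ℝ → ℝ)
    (h : Icc p q ⊆ Ioo (τ - δ τ) (τ + δ τ)) : (single hpq τ hτ).Subordinate δ := by
  intro i hi
  have hi1 : i < 1 := hi
  have : i = 0 := by omega
  subst this
  simpa [single] using h

lemma TPsum_single (g : ℝ → ℝ) (E : Set ℝ) {p q : ℝ} (hpq : p ≤ q) (τ : ℝ)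
    (hτ : τ ∈ Icc p q) (hτE : τ ∈ E) :
    TPsum g E (single hpq τ hτ) = |g q - g p| := by
  simp [TPsum, single, hτE]

def concat {p q r : ℝ} (P : TaggedPartition p q) (Q : TaggedPartition q r) :
    TaggedPartition p r where
  n := P.n + Q.n
  t i := if i ≤ P.n then P.t i else Q.t (i - P.n)
  tag i := if i < P.n then P.tag i else Q.tag (i - P.n)
  t_first := by simp [P.t_first]
  t_last := by
    rcases Nat.eq_zero_or_pos Q.n with h | h
    · have hr : q = r := by rw [← Q.t_first, ← h]; exact Q.t_last
      simp [h, P.t_last, hr]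
    · have h2 : ¬ (P.n + Q.n ≤ P.n) := by omega
      simp only [h2, if_false]
      simpa using Q.t_last
  t_mono := by
    intro i hi
    rcases lt_or_ge i P.n with hiP | hiP
    · have h1 : i ≤ P.n := hiP.le
      have h2 : i + 1 ≤ P.n := hiP
      simp only [h1, h2, if_true]
      exact P.t_mono i hiP
    · have h1 : ¬ (i + 1 ≤ P.n) := by omega
      have key : (if i ≤ P.n then P.t i else Q.t (i - P.n)) = Q.t (i - P.n) := by
        rcases eq_or_lt_of_le hiP with h | h
        · simp only [← h, Nat.sub_self, le_refl, if_true]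
          rw [P.t_last, Q.t_first]
        · have : ¬ (i ≤ P.n) := by omega
          simp [this]
      simp only [h1, if_false, key]
      have h3 : i + 1 - P.n = (i - P.n) + 1 := by omega
      rw [h3]
      exact Q.t_mono (i - P.n) (by omega)
  tag_mem := by
    intro i hi
    rcases lt_or_ge i P.n with hiP | hiP
    · have h1 : i ≤ P.n := hiP.le
      have h2 : i + 1 ≤ P.n := hiP
      simp only [hiP, h1, h2, if_true]
      exact P.tag_mem i hiP
    · have h1 : ¬ (i + 1 ≤ P.n) := by omega
      have h0 : ¬ (i < P.n) := by omega
      have key : (if i ≤ P.n then P.t i else Q.t (i - P.n)) = Q.t (i - P.n) := by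
        rcases eq_or_lt_of_le hiP with h | h
        · simp only [← h, Nat.sub_self, le_refl, if_true]
          rw [P.t_last, Q.t_first]
        · have : ¬ (i ≤ P.n) := by omega
          simp [this]
      simp only [h0, if_false, h1, key]
      have h3 : i + 1 - P.n = (i - P.n) + 1 := by omega
      rw [h3]
      exact Q.tag_mem (i - P.n) (by omega)

lemma concat_t_left {p q r : ℝ} (P : TaggedPartition p q) (Q : TaggedPartition q r)
    {i : ℕ} (h : i ≤ P.n) : (concat P Q).t i = P.t i := by
  simp [concat, h]

lemma concat_t_right {p q r : ℝ} (P : TaggedPartition p q) (Q : TaggedPartition q r)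
    {i : ℕ} (h : P.n ≤ i) : (concat P Q).t i = Q.t (i - P.n) := by
  rcases eq_or_lt_of_le h with h' | h'
  · simp only [concat, ← h', Nat.sub_self, le_refl, if_true]
    rw [P.t_last, Q.t_first]
  · have : ¬ (i ≤ P.n) := by omega
    simp [concat, this]

lemma concat_tag_left {p q r : ℝ} (P : TaggedPartition p q) (Q : TaggedPartition q r)
    {i : ℕ} (h : i < P.n) : (concat P Q).tag i = P.tag i := by
  simp [concat, h]

lemma concat_tag_right {p q r : ℝ} (P : TaggedPartition p q) (Q : TaggedPartition q r)
    {i : ℕ} (h : P.n ≤ i) : (concat P Q).tag i = Q.tag (i - P.n) := by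
  have : ¬ (i < P.n) := by omega
  simp [concat, this]

lemma concat_sub {p q r : ℝ} {P : TaggedPartition p q} {Q : TaggedPartition q r}
    {δ : ℝ → ℝ} (hP : P.Subordinate δ) (hQ : Q.Subordinate δ) :
    (concat P Q).Subordinate δ := by
  intro i hi
  have hi' : i < P.n + Q.n := hi
  rcases lt_or_ge i P.n with hiP | hiP
  · rw [concat_t_left P Q hiP.le, concat_t_left P Q (by omega : i + 1 ≤ P.n),
      concat_tag_left P Q hiP]
    exact hP i hiP
  · rw [concat_t_right P Q hiP, concat_t_right P Q (by omega : P.n ≤ i + 1),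
      concat_tag_right P Q hiP]
    have h3 : i + 1 - P.n = (i - P.n) + 1 := by omega
    rw [h3]
    exact hQ (i - P.n) (by omega)

lemma TPsum_concat (g : ℝ → ℝ) (E : Set ℝ) {p q r : ℝ} (P : TaggedPartition p q)
    (Q : TaggedPartition q r) :
    TPsum g E (concat P Q) = TPsum g E P + TPsum g E Q := by
  have hn : (concat P Q).n = P.n + Q.n := rfl
  unfold TPsum
  rw [hn, Finset.sum_range_add]
  congr 1
  · apply Finset.sum_congr rfl
    intro i hi
    have hi' : i < P.n := Finset.mem_range.1 hi
    rw [concat_tag_left P Q hi', concat_t_left P Q hi'.le,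
      concat_t_left P Q (by omega : i + 1 ≤ P.n)]
  · apply Finset.sum_congr rfl
    intro i hi
    have hi' : i < Q.n := Finset.mem_range.1 hi
    rw [concat_tag_right P Q (by omega : P.n ≤ P.n + i),
      concat_t_right P Q (by omega : P.n ≤ P.n + i),
      concat_t_right P Q (by omega : P.n ≤ P.n + i + 1)]
    have e1 : P.n + i - P.n = i := by omega
    have e2 : P.n + i + 1 - P.n = i + 1 := by omega
    rw [e1, e2]

-- NEW PART:
lemma cousin {p q : ℝ} (δ : ℝ → ℝ) (hδ : ∀ x ∈ Icc p q, 0 < δ x) (hpq : p ≤ q) :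
    ∃ P : TaggedPartition p q, P.Subordinate δ := by
  classical
  set S : Set ℝ := {x | x ∈ Icc p q ∧ ∃ P : TaggedPartition p x, P.Subordinate δ} with hS
  have hpS : p ∈ S := ⟨⟨le_refl p, hpq⟩, triv p, triv_sub p δ⟩
  have hne : S.Nonempty := ⟨p, hpS⟩
  have hbdd : BddAbove S := ⟨q, fun x hx => hx.1.2⟩
  set c := sSup S with hc
  have hcq : c ≤ q := csSup_le hne (fun x hx => hx.1.2)
  have hpc : p ≤ c := le_csSup hbdd hpS
  have hδc : 0 < δ c := hδ c ⟨hpc, hcq⟩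
  obtain ⟨x, hxS, hxc⟩ : ∃ x ∈ S, c - δ c < x :=
    exists_lt_of_lt_csSup hne (by linarith)
  have hxle : x ≤ c := le_csSup hbdd hxS
  set y := min q (c + δ c / 2) with hy
  have hcy : c ≤ y := le_min hcq (by linarith)
  have hxy : x ≤ y := le_trans hxle hcy
  obtain ⟨⟨hpx, hxq⟩, P, hP⟩ := hxS
  have hyq : y ≤ q := min_le_left _ _
  have hyS : y ∈ S := by
    refine ⟨⟨le_trans hpx hxy, hyq⟩, concat P (single hxy c ⟨hxle, hcy⟩), ?_⟩
    refine concat_sub hP (single_sub hxy c ⟨hxle, hcy⟩ δ ?_)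
    intro z hz
    have hzy : z ≤ y := hz.2
    have hyd : y ≤ c + δ c / 2 := min_le_right _ _
    exact ⟨by linarith [hz.1], by linarith⟩
  have hyc : y ≤ c := le_csSup hbdd hyS
  have hqc : q ≤ c := by
    by_contra hqc
    push_neg at hqc
    have : c < y := lt_min hqc (by linarith)
    linarith
  have hcq' : y = q := le_antisymm hyq (hqc.trans hcy)
  rw [hcq'] at hyS
  exact hyS.2

lemma build {a b : ℝ} (g : ℝ → ℝ) (E : Set ℝ) (δ : ℝ → ℝ)
    (hδ : ∀ x ∈ Icc a b, 0 < δ x) (m : ℕ) :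
    ∀ (c : ℝ) (u v : ℕ → ℝ), a ≤ c → c ≤ b →
    (∀ k < m, c ≤ u k) → (∀ k < m, u k ≤ v k) → (∀ k < m, v k ≤ b) →
    (∀ j k, j < k → k < m → v j ≤ u k) →
    (∀ k < m, u k = v k ∨ (u k ∈ E ∧ v k < u k + δ (u k))) →
    ∃ P : TaggedPartition c b, P.Subordinate δ ∧
      (∑ k ∈ Finset.range m, |g (v k) - g (u k)|) ≤ TPsum g E P := by
  induction m with
  | zero =>
    intro c u v hac hcb _ _ _ _ _
    obtain ⟨P, hP⟩ := cousin δ (fun x hx => hδ x ⟨le_trans hac hx.1, hx.2⟩) hcb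
    exact ⟨P, hP, by simpa using TPsum_nonneg g E P⟩
  | succ m ih =>
    intro c u v hac hcb H4 H1 H3 H6 H5
    have hm0 : 0 < m + 1 := Nat.succ_pos m
    have hcu0 : c ≤ u 0 := H4 0 hm0
    have huv0 : u 0 ≤ v 0 := H1 0 hm0
    have hv0b : v 0 ≤ b := H3 0 hm0
    have hav0 : a ≤ v 0 := by linarith
    have hau0 : a ≤ u 0 := by linarith
    -- recursive part from v 0 to b
    obtain ⟨P3, hP3sub, hP3sum⟩ := ih (v 0) (fun k => u (k + 1)) (fun k => v (k + 1))
      hav0 hv0b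
      (fun k hk => H6 0 (k + 1) (Nat.succ_pos k) (by omega))
      (fun k hk => H1 (k + 1) (by omega))
      (fun k hk => H3 (k + 1) (by omega))
      (fun j k hjk hk => H6 (j + 1) (k + 1) (by omega) (by omega))
      (fun k hk => H5 (k + 1) (by omega))
    rcases H5 0 hm0 with h0 | ⟨huE, hv0δ⟩
    · -- degenerate: u 0 = v 0, just shift
      obtain ⟨P1, hP1⟩ := cousin δ (fun x hx => hδ x ⟨le_trans hac hx.1,
        le_trans hx.2 (by linarith)⟩) (show c ≤ v 0 by linarith)
      refine ⟨concat P1 P3, concat_sub hP1 hP3sub, ?_⟩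
      rw [TPsum_concat, Finset.sum_range_succ']
      have h00 : |g (v 0) - g (u 0)| = 0 := by rw [h0]; simp
      rw [h00]
      have := TPsum_nonneg g E P1
      linarith
    · -- active interval [u 0, v 0] with tag u 0 ∈ E
      have hδu0 : 0 < δ (u 0) := hδ (u 0) ⟨hau0, by linarith⟩
      obtain ⟨P2sub⟩ : Nonempty True := ⟨trivial⟩
      obtain ⟨P1, hP1⟩ := cousin δ (fun x hx => hδ x ⟨le_trans hac hx.1,
        le_trans hx.2 (by linarith)⟩) hcu0
      have hu0mem : u 0 ∈ Icc (u 0) (v 0) := ⟨le_refl _, huv0⟩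
      have hsub2 : (single huv0 (u 0) hu0mem).Subordinate δ := by
        refine single_sub huv0 (u 0) hu0mem δ ?_
        intro z hz
        exact ⟨by linarith [hz.1], by linarith [hz.2]⟩
      refine ⟨concat P1 (concat (single huv0 (u 0) hu0mem) P3),
        concat_sub hP1 (concat_sub hsub2 hP3sub), ?_⟩
      rw [TPsum_concat, TPsum_concat, TPsum_single g E huv0 (u 0) hu0mem huE,
        Finset.sum_range_succ']
      have := TPsum_nonneg g E P1
      linarith

end NVAux

open NVAux in
theorem stmt6 (a b : ℝ) (g : ℝ → ℝ) (E : Set ℝ) (hE : E ⊆ Set.Icc a b)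
    (h : NegVar a b g E) :
    MeasureTheory.volume (g '' E) = 0 := by
  classical
  rcases lt_or_ge b a with hba | hab
  · have hEe : E = ∅ := by
      rw [Set.Icc_eq_empty_of_lt hba] at hE
      exact Set.eq_empty_of_subset_empty hE
    simp [hEe]
  rcases eq_or_lt_of_le hab with heq | hab'
  · -- a = b
    have h1 : g '' E ⊆ {g a} := by
      rintro _ ⟨x, hx, rfl⟩
      have := hE hx
      rw [← heq] at this
      have : x = a := le_antisymm this.2 this.1
      simp [this]
    refine le_antisymm ?_ zero_le
    calc volume (g '' E) ≤ volume {g a} := measure_mono h1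
      _ = 0 := Real.volume_singleton
  -- main case a < b
  refine le_antisymm ?_ zero_le
  have key : ∀ ε : ℝ, 0 < ε → volume (g '' E) ≤ ENNReal.ofReal ε := by
    intro ε hε
    obtain ⟨δ, hgauge, hpart⟩ := h (ε / 2) (by linarith)
    set En : ℕ → Set ℝ := fun n => {x | x ∈ E ∧ 1 / ((n : ℝ) + 1) < δ x} with hEn
    have hEun : E = ⋃ n, En n := by
      ext x
      constructor
      · intro hx
        have hpos : 0 < δ x := hgauge x (hE hx)
        obtain ⟨n, hn⟩ := exists_nat_one_div_lt hpos
        exact mem_iUnion.2 ⟨n, hx, hn⟩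
      · intro hx
        obtain ⟨n, hn⟩ := mem_iUnion.1 hx
        exact hn.1
    have hmono : Monotone fun n => g '' En n := by
      intro n n' hnn' z hz
      obtain ⟨x, hx, rfl⟩ := hz
      refine ⟨x, ⟨hx.1, lt_of_le_of_lt ?_ hx.2⟩, rfl⟩
      apply one_div_le_one_div_of_le
      · positivity
      · have : (n : ℝ) ≤ n' := Nat.cast_le.2 hnn'
        linarith
    rw [hEun, image_iUnion, Directed.measure_iUnion hmono.directed_le]
    refine iSup_le fun n => ?_
    -- choose m
    obtain ⟨m, hm⟩ := exists_nat_gt (2 * ((n : ℝ) + 1) * (b - a))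
    have hn1 : (0 : ℝ) < (n : ℝ) + 1 := by positivity
    have hm0 : 0 < m := by
      by_contra hm0
      push_neg at hm0
      interval_cases m
      · simp at hm
        nlinarith
    have hm0' : (0 : ℝ) < m := by exact_mod_cast hm0
    set L := (b - a) / m with hL
    have hLpos : 0 < L := div_pos (by linarith) hm0'
    have hLlt : L < 1 / (2 * ((n : ℝ) + 1)) := by
      rw [hL, div_lt_div_iff₀ hm0' (by positivity)]
      nlinarith
    set q : ℕ → ℝ := fun k => a + k * L with hq
    have hq0 : q 0 = a := by simp [hq]
    have hqm : q m = b := by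
      simp only [hq, hL]
      field_simp
      ring
    have hqmono : ∀ j k : ℕ, j ≤ k → q j ≤ q k := by
      intro j k hjk
      simp only [hq]
      have : (j : ℝ) ≤ k := Nat.cast_le.2 hjk
      nlinarith
    have hqstep : ∀ k : ℕ, q (k + 1) - q k = L := by
      intro k
      simp only [hq]
      push_cast
      ring
    set S : ℕ → Set ℝ := fun k => En n ∩ Icc (q k) (q (k + 1)) with hSdef
    -- pointwise pair bound
    have hsingle : ∀ x y : ℝ, x ∈ E → a ≤ x → x ≤ y → y ≤ b → y < x + δ x →
        |g y - g x| < ε / 2 := by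
      intro x y hxE hax hxy hyb hyδ
      obtain ⟨P, hsub, hsum⟩ := build g E δ hgauge 1 a (fun _ => x) (fun _ => y)
        le_rfl hab (fun k _ => hax) (fun k _ => hxy) (fun k _ => hyb)
        (fun j k hjk hk => by omega) (fun k _ => Or.inr ⟨hxE, hyδ⟩)
      have h2 := hpart P hsub
      rw [Finset.sum_range_one] at hsum
      exact lt_of_le_of_lt hsum h2
    have hmemab : ∀ {k x}, x ∈ S k → a ≤ x ∧ x ≤ b := by
      intro k x hx
      exact ⟨(hE hx.1.1).1, (hE hx.1.1).2⟩
    have hLn : L < 1 / ((n : ℝ) + 1) := by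
      have : 1 / (2 * ((n : ℝ) + 1)) ≤ 1 / ((n : ℝ) + 1) := by
        apply one_div_le_one_div_of_le <;> nlinarith
      linarith
    have hpairS : ∀ k : ℕ, ∀ x ∈ S k, ∀ y ∈ S k, |g x - g y| ≤ ε / 2 := by
      intro k x hx y hy
      have hdk : q (k + 1) - q k = L := hqstep k
      rcases le_total x y with hxy | hxy
      · rw [abs_sub_comm]
        refine le_of_lt (hsingle x y hx.1.1 (hmemab hx).1 hxy (hmemab hy).2 ?_)
        have h1 : y - x ≤ L := by
          have := hx.2.1; have := hy.2.2; linarith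
        have h2 : 1 / ((n : ℝ) + 1) < δ x := hx.1.2
        linarith
      · refine le_of_lt (hsingle y x hy.1.1 (hmemab hy).1 hxy (hmemab hx).2 ?_)
        have h1 : x - y ≤ L := by
          have := hy.2.1; have := hx.2.2; linarith
        have h2 : 1 / ((n : ℝ) + 1) < δ y := hy.1.2
        linarith
    set σ := ε / (4 * m) with hσdef
    have hσpos : 0 < σ := by positivity
    -- per-k data
    have hth : ∀ k : ℕ, ∃ uv : ℝ × ℝ, uv.1 ≤ uv.2 ∧ q k ≤ uv.1 ∧ uv.2 ≤ q (k + 1) ∧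
        (uv.1 = uv.2 ∨ (uv.1 ∈ E ∧ uv.2 < uv.1 + δ uv.1)) ∧
        volume (g '' S k) ≤ ENNReal.ofReal (|g uv.2 - g uv.1| + 2 * σ) := by
      intro k
      by_cases hk : (S k).Nonempty
      · obtain ⟨z, hz⟩ := hk
        set T := g '' S k with hT
        have hTne : T.Nonempty := ⟨g z, mem_image_of_mem _ hz⟩
        have hTbddA : BddAbove T := by
          refine ⟨g z + ε / 2, ?_⟩
          rintro _ ⟨x, hx, rfl⟩
          have := hpairS k x hx z hz
          have := abs_le.1 this
          linarith [this.2]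
        have hTbddB : BddBelow T := by
          refine ⟨g z - ε / 2, ?_⟩
          rintro _ ⟨x, hx, rfl⟩
          have := hpairS k x hx z hz
          have := abs_le.1 this
          linarith [this.1]
        obtain ⟨w1, hw1T, hw1⟩ := exists_lt_of_lt_csSup hTne
          (show sSup T - σ < sSup T by linarith)
        obtain ⟨w2, hw2T, hw2⟩ := exists_lt_of_csInf_lt hTne
          (show sInf T < sInf T + σ by linarith)
        obtain ⟨y1, hy1, rfl⟩ := hw1T
        obtain ⟨y2, hy2, rfl⟩ := hw2T
        have hy1ab := hmemab hy1
        have hy2ab := hmemab hy2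
        have habs : |g (max y1 y2) - g (min y1 y2)| = |g y1 - g y2| := by
          rcases le_total y1 y2 with h12 | h12
          · rw [max_eq_right h12, min_eq_left h12, abs_sub_comm]
          · rw [max_eq_left h12, min_eq_right h12]
        have hminS : min y1 y2 ∈ S k := by
          rcases le_total y1 y2 with h12 | h12
          · rwa [min_eq_left h12]
          · rwa [min_eq_right h12]
        have hmaxS : max y1 y2 ∈ S k := by
          rcases le_total y1 y2 with h12 | h12
          · rwa [max_eq_right h12]
          · rwa [max_eq_left h12]
        refine ⟨(min y1 y2, max y1 y2), min_le_max, hminS.2.1, hmaxS.2.2,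
          Or.inr ⟨hminS.1.1, ?_⟩, ?_⟩
        · have h1 : max y1 y2 - min y1 y2 ≤ L := by
            have := hminS.2.1; have := hmaxS.2.2; have := hqstep k; linarith
          have h2 : 1 / ((n : ℝ) + 1) < δ (min y1 y2) := hminS.1.2
          simp only
          linarith
        · -- volume bound
          have hsub : T ⊆ Icc (sInf T) (sSup T) := fun w hw =>
            ⟨csInf_le hTbddB hw, le_csSup hTbddA hw⟩
          have h2 : sSup T - sInf T ≤ |g (max y1 y2) - g (min y1 y2)| + 2 * σ := by
            rw [habs]
            have h3 : g y1 - g y2 ≤ |g y1 - g y2| := le_abs_self _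
            linarith
          calc volume (g '' S k) ≤ volume (Icc (sInf T) (sSup T)) := measure_mono hsub
            _ = ENNReal.ofReal (sSup T - sInf T) := Real.volume_Icc
            _ ≤ ENNReal.ofReal (|g (max y1 y2) - g (min y1 y2)| + 2 * σ) :=
                ENNReal.ofReal_le_ofReal h2
      · have hkempty : S k = ∅ := not_nonempty_iff_eq_empty.1 hk
        refine ⟨(q k, q k), le_rfl, le_rfl, ?_, Or.inl rfl, ?_⟩
        · have := hqstep k; linarith
        · simp [hkempty]
    choose uv huv1 huv2 huv3 huv4 huv5 using hth
    set u : ℕ → ℝ := fun k => (uv k).1 with hu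
    set v : ℕ → ℝ := fun k => (uv k).2 with hv
    -- build partition for the u,v family
    obtain ⟨P, hPsub, hPsum⟩ := build g E δ hgauge m a u v le_rfl hab
      (fun k hk => by
        have : a ≤ q k := hq0 ▸ hqmono 0 k (Nat.zero_le k)
        exact this.trans (huv2 k))
      (fun k _ => huv1 k)
      (fun k hk => by
        have : q (k + 1) ≤ b := hqm ▸ hqmono (k + 1) m (by omega)
        exact (huv3 k).trans this)
      (fun j k hjk hk => by
        have h1 : q (j + 1) ≤ q k := hqmono (j + 1) k (by omega)
        exact (huv3 j).trans (h1.trans (huv2 k)))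
      (fun k _ => huv4 k)
    have hPlt := hpart P hPsub
    -- covering
    have hXk : ∀ x ∈ Icc a b, ∃ k, k < m ∧ x ∈ Icc (q k) (q (k + 1)) := by
      intro x hx
      set k0 := ⌊(x - a) / L⌋₊ with hk0
      have hnn : 0 ≤ (x - a) / L := div_nonneg (by linarith [hx.1]) hLpos.le
      by_cases hk0m : k0 < m
      · refine ⟨k0, hk0m, ?_, ?_⟩
        · have h1 : (k0 : ℝ) ≤ (x - a) / L := Nat.floor_le hnn
          have h2 : (k0 : ℝ) * L ≤ x - a := (le_div_iff₀ hLpos).1 h1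
          simp only [hq]
          linarith
        · have h1 : (x - a) / L < k0 + 1 := Nat.lt_floor_add_one _
          have h2 : x - a < ((k0 : ℝ) + 1) * L := by
            rw [div_lt_iff₀ hLpos] at h1
            linarith
          simp only [hq]
          push_cast
          linarith
      · push_neg at hk0m
        have h1 : (m : ℝ) ≤ (x - a) / L := by
          have := (Nat.le_floor_iff hnn).1 hk0m
          exact this
        have h2 : (m : ℝ) * L ≤ x - a := by
          rw [le_div_iff₀ hLpos] at h1
          linarith
        have hxb : x = b := by
          have : (m : ℝ) * L = b - a := by
            rw [hL]; field_simp
          have := hx.2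
          linarith
        refine ⟨m - 1, by omega, ?_, ?_⟩
        · have : q (m - 1) ≤ q m := hqmono (m - 1) m (by omega)
          rw [hqm] at this
          rw [hxb]; exact this
        · have hm1 : m - 1 + 1 = m := by omega
          rw [hm1, hqm, hxb]
        
    have hcov : g '' En n ⊆ ⋃ k ∈ Finset.range m, g '' S k := by
      rintro _ ⟨x, hx, rfl⟩
      obtain ⟨k, hk, hxk⟩ := hXk x (hE hx.1)
      exact mem_biUnion (Finset.mem_range.2 hk) (mem_image_of_mem _ ⟨hx, hxk⟩)
    -- finish
    have hsum2 : (∑ k ∈ Finset.range m, (|g (v k) - g (u k)| + 2 * σ)) ≤ ε := by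
      rw [Finset.sum_add_distrib, Finset.sum_const, Finset.card_range]
      have hmne : (m : ℝ) ≠ 0 := ne_of_gt hm0'
      have h2 : m • (2 * σ) = ε / 2 := by
        rw [nsmul_eq_mul, hσdef]
        field_simp
        ring
      rw [h2]
      have hPlt' : TPsum g E P < ε / 2 := hPlt
      linarith
    calc volume (g '' En n)
        ≤ volume (⋃ k ∈ Finset.range m, g '' S k) := measure_mono hcov
      _ ≤ ∑ k ∈ Finset.range m, volume (g '' S k) := measure_biUnion_finset_le _ _
      _ ≤ ∑ k ∈ Finset.range m, ENNReal.ofReal (|g (v k) - g (u k)| + 2 * σ) :=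
          Finset.sum_le_sum fun k _ => huv5 k
      _ = ENNReal.ofReal (∑ k ∈ Finset.range m, (|g (v k) - g (u k)| + 2 * σ)) := by
          rw [ENNReal.ofReal_sum_of_nonneg]
          intro k _
          positivity
      _ ≤ ENNReal.ofReal ε := ENNReal.ofReal_le_ofReal hsum2
  refine ENNReal.le_of_forall_pos_le_add fun ε' hε' _ => ?_
  rw [zero_add]
  have := key ε' hε'
  rwa [ENNReal.ofReal_coe_nnreal] at this
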